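/- Let X be a nonempty finite set with |X| = n and let ℰ = {A ⊆ X : |A| is even}. Then the upper dimension, dual upper dimension, and cylindrical dimension of ℰ are all equal to 2^{n-1}. -/

import Mathlib

set_option linter.unusedSectionVars false


open Set

/-- A family of sets is convex if it is closed under set-theoretic betweenness. -/
def IsConvexFam {X : Type*} (𝒜 : Set (Set X)) : Prop :=
  ∀ S ∈ 𝒜, ∀ T ∈ 𝒜, ∀ C : Set X, S ⊆ C → C ⊆ T → C ∈ 𝒜

/-- A family is dominated if its union belongs to it. -/
def IsDominatedFam {X : Type*} (𝒜 : Set (Set X)) : Prop := ⋃₀ 𝒜 ∈ 𝒜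

/-- A family is supported if it is nonempty and its intersection belongs to it. -/
def IsSupportedFam {X : Type*} (𝒜 : Set (Set X)) : Prop := 𝒜.Nonempty ∧ ⋂₀ 𝒜 ∈ 𝒜

/-- A family is an interval if it equals `[A,B] = {C | A ⊆ C ⊆ B}` for some `A ⊆ B`. -/
def IsIntervalFam {X : Type*} (𝒜 : Set (Set X)) : Prop :=
  ∃ A B : Set X, A ⊆ B ∧ 𝒜 = Set.Icc A B

/-- `𝒢` dominates `𝒜` if there are dominated convex families `𝒟 G ⊆ 𝒜` (`G ∈ 𝒢`)
with `⋃ G ∈ 𝒢, 𝒟 G = 𝒜` and `⋃₀ (𝒟 G) = G`. -/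
def DominatesFam {X : Type*} (𝒢 𝒜 : Set (Set X)) : Prop :=
  𝒢 ⊆ 𝒜 ∧ ∃ 𝒟 : Set X → Set (Set X),
    (∀ G ∈ 𝒢, 𝒟 G ⊆ 𝒜 ∧ IsConvexFam (𝒟 G) ∧ IsDominatedFam (𝒟 G) ∧ ⋃₀ (𝒟 G) = G) ∧
    (⋃ G ∈ 𝒢, 𝒟 G) = 𝒜

/-- `𝒦` supports `𝒜` if there are supported convex families `𝒮 K ⊆ 𝒜` (`K ∈ 𝒦`)
with `⋃ K ∈ 𝒦, 𝒮 K = 𝒜` and `⋂₀ (𝒮 K) = K`. -/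
def SupportsFam {X : Type*} (𝒦 𝒜 : Set (Set X)) : Prop :=
  𝒦 ⊆ 𝒜 ∧ ∃ 𝒮 : Set X → Set (Set X),
    (∀ K ∈ 𝒦, 𝒮 K ⊆ 𝒜 ∧ IsConvexFam (𝒮 K) ∧ IsSupportedFam (𝒮 K) ∧ ⋂₀ (𝒮 K) = K) ∧
    (⋃ K ∈ 𝒦, 𝒮 K) = 𝒜

/-- The upper dimension: the minimal cardinality of a dominating subfamily. -/
noncomputable def upperDim {X : Type*} (𝒜 : Set (Set X)) : ℕ∞ :=
  sInf {n : ℕ∞ | ∃ 𝒢 : Set (Set X), DominatesFam 𝒢 𝒜 ∧ 𝒢.encard = n}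

/-- The dual upper dimension: the minimal cardinality of a supporting subfamily. -/
noncomputable def dualDim {X : Type*} (𝒜 : Set (Set X)) : ℕ∞ :=
  sInf {n : ℕ∞ | ∃ 𝒦 : Set (Set X), SupportsFam 𝒦 𝒜 ∧ 𝒦.encard = n}

/-- The cylindrical dimension: the minimal number of intervals whose union is `𝒜`. -/
noncomputable def cylDim {X : Type*} (𝒜 : Set (Set X)) : ℕ∞ :=
  sInf {n : ℕ∞ | ∃ 𝕀 : Set (Set (Set X)),
    (∀ J ∈ 𝕀, IsIntervalFam J) ∧ ⋃₀ 𝕀 = 𝒜 ∧ 𝕀.encard = n}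

open Classical in
noncomputable def chiFun {X : Type*} (A : Set X) (x : X) : Bool := decide (x ∈ A)

/-- The set-theoretic operation corresponding to a binary operation on `{0,1}`. -/
noncomputable def setOp {X : Type*} (op : Bool → Bool → Bool) (A B : Set X) : Set X :=
  {x | op (chiFun A x) (chiFun B x) = true}

/-- The tensor operation on families corresponding to a binary operation on `{0,1}`. -/
noncomputable def tensorFam {X : Type*} (op : Bool → Bool → Bool)
    (𝒜 ℬ : Set (Set X)) : Set (Set X) :=
  Set.image2 (setOp op) 𝒜 ℬ

/-- The convex shadow of `A` in `𝒜`. -/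
def convexShadow {X : Type*} (𝒜 : Set (Set X)) (A : Set X) : Set (Set X) :=
  {B | B ⊆ A ∧ Set.Icc B A ⊆ 𝒜}

/-- Domain of a relation. -/
def relDom {X Y : Type*} (R : Set (X × Y)) : Set X := {x | ∃ y, (x, y) ∈ R}

/-- Range of a relation. -/
def relRg {X Y : Type*} (R : Set (X × Y)) : Set Y := {y | ∃ x, (x, y) ∈ R}

/-- The family of (partial) functions from `X` to `Y`, as sets of pairs. -/
def partialFunFam (X Y : Type*) : Set (Set (X × Y)) :=
  {f | ∀ x y y', (x, y) ∈ f → (x, y') ∈ f → y = y'}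

/-- The family of relations on `X` with disjoint domain and range. -/
def exclFam (X : Type*) : Set (Set (X × X)) :=
  {R | relDom R ∩ relRg R = ∅}

/-- The family of relations on `X` whose domain is included in their range. -/
def inclFam (X : Type*) : Set (Set (X × X)) :=
  {R | relDom R ⊆ relRg R}

/-- The family of anonymous relations: every point of the domain has two distinct images. -/
def anonFam (X Y : Type*) : Set (Set (X × Y)) :=
  {R | ∀ x ∈ relDom R, ∃ y y' : Y, y ≠ y' ∧ (x, y) ∈ R ∧ (x, y') ∈ R}

/-- The family of rectangles `A × B`. -/
def rectFam (X Y : Type*) : Set (Set (X × Y)) :=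
  {P | ∃ (A : Set X) (B : Set Y), P = A ×ˢ B}

/-- General tensor disjunction of an indexed family of families of sets. -/
def gTensorDisj {ι X : Type*} (𝒜 : ι → Set (Set X)) : Set (Set X) :=
  {U | ∃ f : ι → Set X, (∀ i, f i ∈ 𝒜 i) ∧ U = ⋃ i, f i}

/-- The Kripke operator associated to a relation `ℛ ⊆ 𝒫(Y) × 𝒫(X)^n`. -/
def kripkeOp {X Y : Type*} {n : ℕ} (ℛ : Set (Set Y × (Fin n → Set X)))
    (𝒜 : Fin n → Set (Set X)) : Set (Set Y) :=
  {B | ∃ A : Fin n → Set X, (∀ i, A i ∈ 𝒜 i) ∧ (B, A) ∈ ℛ}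


section Aux
variable {X : Type*} [Fintype X]

lemma icc_sub_even {S T : Set X} (hST : S ⊆ T)
    (h : Set.Icc S T ⊆ {A : Set X | Even A.ncard}) : S = T := by
  by_contra hne
  obtain ⟨x, hxT, hxS⟩ := Set.exists_of_ssubset ⟨hST, fun h' => hne (subset_antisymm hST h')⟩
  have hS : Even S.ncard := h ⟨Subset.rfl, hST⟩
  have hI : Even (insert x S).ncard :=
    h ⟨Set.subset_insert _ _, Set.insert_subset hxT hST⟩
  rw [Set.ncard_insert_of_notMem hxS S.toFinite] at hI
  exact (Nat.even_add_one.mp hI) hS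

lemma dom_singleton {𝒟 : Set (Set X)} (hsub : 𝒟 ⊆ {A : Set X | Even A.ncard})
    (hconv : IsConvexFam 𝒟) (hdom : IsDominatedFam 𝒟) : 𝒟 = {⋃₀ 𝒟} := by
  apply subset_antisymm
  · intro S hS
    have h1 : S ⊆ ⋃₀ 𝒟 := Set.subset_sUnion_of_mem hS
    have h2 : Set.Icc S (⋃₀ 𝒟) ⊆ {A : Set X | Even A.ncard} :=
      fun C hC => hsub (hconv S hS _ hdom C hC.1 hC.2)
    exact icc_sub_even h1 h2
  · exact Set.singleton_subset_iff.mpr hdom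

lemma sup_singleton {𝒮 : Set (Set X)} (hsub : 𝒮 ⊆ {A : Set X | Even A.ncard})
    (hconv : IsConvexFam 𝒮) (hsup : IsSupportedFam 𝒮) : 𝒮 = {⋂₀ 𝒮} := by
  apply subset_antisymm
  · intro S hS
    have h1 : ⋂₀ 𝒮 ⊆ S := Set.sInter_subset_of_mem hS
    have h2 : Set.Icc (⋂₀ 𝒮) S ⊆ {A : Set X | Even A.ncard} :=
      fun C hC => hsub (hconv _ hsup.2 S hS C hC.1 hC.2)
    exact (icc_sub_even h1 h2).symm
  · simpa using hsup.2
end Aux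


section Cnt
variable {X : Type*} [Fintype X]

open Classical in
noncomputable def flip0 (x0 : X) (A : Set X) : Set X :=
  if x0 ∈ A then A \ {x0} else insert x0 A

lemma flip0_invol (x0 : X) : Function.Involutive (flip0 x0) := by
  classical
  intro A
  by_cases h : x0 ∈ A
  · have e1 : flip0 x0 A = A \ {x0} := if_pos h
    have h2 : x0 ∉ A \ {x0} := fun hh => hh.2 rfl
    rw [e1, flip0, if_neg h2, Set.insert_diff_singleton, Set.insert_eq_of_mem h]
  · have e1 : flip0 x0 A = insert x0 A := if_neg h
    have h2 : x0 ∈ insert x0 A := Set.mem_insert _ _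
    rw [e1, flip0, if_pos h2]
    exact Set.insert_diff_self_of_notMem h

lemma flip0_parity (x0 : X) (A : Set X) :
    Even ((flip0 x0 A).ncard) ↔ ¬ Even A.ncard := by
  classical
  by_cases h : x0 ∈ A
  · have h1 : 0 < A.ncard := (Set.ncard_pos A.toFinite).mpr ⟨x0, h⟩
    rw [flip0, if_pos h, Set.ncard_diff_singleton_of_mem h,
      Nat.even_iff, Nat.even_iff]
    omega
  · rw [flip0, if_neg h, Set.ncard_insert_of_notMem h A.toFinite,
      Nat.even_iff, Nat.even_iff]
    omega

lemma even_family_ncard [Nonempty X] :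
    {A : Set X | Even A.ncard}.ncard = 2 ^ (Fintype.card X - 1) := by
  classical
  set E : Set (Set X) := {A : Set X | Even A.ncard} with hE
  obtain ⟨x0⟩ := ‹Nonempty X›
  have himg : Eᶜ = flip0 x0 '' E := by
    ext A
    simp only [mem_compl_iff, hE, mem_setOf_eq, Set.mem_image]
    constructor
    · intro hA
      refine ⟨flip0 x0 A, ?_, flip0_invol x0 A⟩
      exact (flip0_parity x0 A).mpr hA
    · rintro ⟨B, hB, rfl⟩
      rw [flip0_parity]
      simpa using hB
  have hcard : Eᶜ.ncard = E.ncard := by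
    rw [himg, Set.ncard_image_of_injective _ (flip0_invol x0).injective]
  have htot : E.ncard + Eᶜ.ncard = Fintype.card (Set X) := by
    rw [Set.ncard_add_ncard_compl E, Nat.card_eq_fintype_card]
  rw [Fintype.card_set] at htot
  have hn : 0 < Fintype.card X := Fintype.card_pos
  have hpow : 2 ^ Fintype.card X = 2 * 2 ^ (Fintype.card X - 1) := by
    conv_lhs => rw [← Nat.sub_add_cancel hn]
    rw [pow_succ]
    ring
  omega
end Cnt

section Main
variable {X : Type*} [Fintype X]

lemma interval_eq_singleton {J : Set (Set X)} (hJ : IsIntervalFam J)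
    (hsub : J ⊆ {A : Set X | Even A.ncard}) : ∃ A, Even A.ncard ∧ J = {A} := by
  obtain ⟨A, B, hAB, rfl⟩ := hJ
  have hA : A = B := icc_sub_even hAB hsub
  subst hA
  exact ⟨A, hsub ⟨Subset.rfl, Subset.rfl⟩, Set.Icc_self A⟩

theorem stmt3' [Nonempty X] :
    upperDim {A : Set X | Even A.ncard} = ((2 ^ (Fintype.card X - 1) : ℕ) : ℕ∞) ∧
    dualDim {A : Set X | Even A.ncard} = ((2 ^ (Fintype.card X - 1) : ℕ) : ℕ∞) ∧
    cylDim {A : Set X | Even A.ncard} = ((2 ^ (Fintype.card X - 1) : ℕ) : ℕ∞) := by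
  classical
  set ℰ : Set (Set X) := {A : Set X | Even A.ncard} with hℰ
  have hcard : ℰ.encard = ((2 ^ (Fintype.card X - 1) : ℕ) : ℕ∞) := by
    rw [← (Set.toFinite ℰ).cast_ncard_eq, hℰ, even_family_ncard]
  have hconvS : ∀ G : Set X, IsConvexFam ({G} : Set (Set X)) := by
    intro G S hS T hT C h1 h2
    rw [Set.mem_singleton_iff] at hS hT
    subst hS; subst hT
    exact subset_antisymm h2 h1
  refine ⟨?_, ?_, ?_⟩
  · -- upperDim
    have hset : {n : ℕ∞ | ∃ 𝒢 : Set (Set X), DominatesFam 𝒢 ℰ ∧ 𝒢.encard = n}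
        = {ℰ.encard} := by
      ext n
      simp only [Set.mem_setOf_eq, Set.mem_singleton_iff]
      constructor
      · rintro ⟨𝒢, ⟨hsub, 𝒟, h1, h2⟩, rfl⟩
        congr 1
        apply subset_antisymm hsub
        intro A hA
        rw [← h2] at hA
        simp only [Set.mem_iUnion] at hA
        obtain ⟨G, hG, hAD⟩ := hA
        obtain ⟨hDsub, hconv, hdom', hUn⟩ := h1 G hG
        rw [dom_singleton hDsub hconv hdom', hUn, Set.mem_singleton_iff] at hAD
        subst hAD; exact hG
      · rintro rfl
        refine ⟨ℰ, ⟨Subset.rfl, fun G => {G}, fun G hG => ⟨?_, hconvS G, ?_, ?_⟩, ?_⟩, rfl⟩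
        · exact Set.singleton_subset_iff.mpr hG
        · show ⋃₀ {G} ∈ ({G} : Set (Set X))
          rw [Set.sUnion_singleton]; exact Set.mem_singleton G
        · exact Set.sUnion_singleton G
        · ext A; simp
    rw [upperDim, hset, sInf_singleton, hcard]
  · -- dualDim
    have hset : {n : ℕ∞ | ∃ 𝒦 : Set (Set X), SupportsFam 𝒦 ℰ ∧ 𝒦.encard = n}
        = {ℰ.encard} := by
      ext n
      simp only [Set.mem_setOf_eq, Set.mem_singleton_iff]
      constructor
      · rintro ⟨𝒦, ⟨hsub, 𝒮, h1, h2⟩, rfl⟩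
        congr 1
        apply subset_antisymm hsub
        intro A hA
        rw [← h2] at hA
        simp only [Set.mem_iUnion] at hA
        obtain ⟨K, hK, hAS⟩ := hA
        obtain ⟨hSsub, hconv, hsup', hIn⟩ := h1 K hK
        rw [sup_singleton hSsub hconv hsup', hIn, Set.mem_singleton_iff] at hAS
        subst hAS; exact hK
      · rintro rfl
        refine ⟨ℰ, ⟨Subset.rfl, fun K => {K}, fun K hK => ⟨?_, hconvS K, ⟨?_, ?_⟩, ?_⟩, ?_⟩, rfl⟩
        · exact Set.singleton_subset_iff.mpr hK
        · exact ⟨K, rfl⟩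
        · show ⋂₀ {K} ∈ ({K} : Set (Set X))
          rw [Set.sInter_singleton]; exact Set.mem_singleton K
        · exact Set.sInter_singleton K
        · ext A; simp
    rw [dualDim, hset, sInf_singleton, hcard]
  · -- cylDim
    have hset : {n : ℕ∞ | ∃ 𝕀 : Set (Set (Set X)),
        (∀ J ∈ 𝕀, IsIntervalFam J) ∧ ⋃₀ 𝕀 = ℰ ∧ 𝕀.encard = n} = {ℰ.encard} := by
      ext n
      simp only [Set.mem_setOf_eq, Set.mem_singleton_iff]
      constructor
      · rintro ⟨𝕀, hint, hun, rfl⟩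
        have h𝕀 : 𝕀 = Set.singleton '' ℰ := by
          have hsubJ : ∀ J ∈ 𝕀, J ⊆ ℰ := by
            intro J hJ
            rw [← hun]
            exact Set.subset_sUnion_of_mem hJ
          apply subset_antisymm
          · intro J hJ
            obtain ⟨A, hA, rfl⟩ := interval_eq_singleton (hint J hJ) (hsubJ J hJ)
            exact ⟨A, hA, rfl⟩
          · rintro _ ⟨A, hA, rfl⟩
            have hA' : A ∈ ⋃₀ 𝕀 := by rw [hun]; exact hA
            obtain ⟨J, hJ, hAJ⟩ := hA'
            obtain ⟨A', _, rfl⟩ := interval_eq_singleton (hint J hJ) (hsubJ J hJ)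
            have : A = A' := hAJ
            subst this
            exact hJ
        rw [h𝕀]
        exact Set.singleton_injective.encard_image ℰ
      · rintro rfl
        refine ⟨Set.singleton '' ℰ, ?_, ?_, ?_⟩
        · rintro _ ⟨A, _, rfl⟩
          exact ⟨A, A, Subset.rfl, (Set.Icc_self A).symm⟩
        · ext A
          simp only [Set.sUnion_image, Set.mem_iUnion]
          constructor
          · rintro ⟨B, hB, hAB⟩
            have : A = B := hAB
            subst this; exact hB
          · intro hA; exact ⟨A, hA, rfl⟩
        · exact Set.singleton_injective.encard_image ℰ
    rw [cylDim, hset, sInf_singleton, hcard]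
end Main

theorem stmt3 {X : Type*} [Fintype X] [Nonempty X] :
    upperDim {A : Set X | Even A.ncard} = ((2 ^ (Fintype.card X - 1) : ℕ) : ℕ∞) ∧
    dualDim {A : Set X | Even A.ncard} = ((2 ^ (Fintype.card X - 1) : ℕ) : ℕ∞) ∧
    cylDim {A : Set X | Even A.ncard} = ((2 ^ (Fintype.card X - 1) : ℕ) : ℕ∞) :=
  stmt3'
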